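/- Continuous H²-norm of the trigonometric interpolant is controlled by the discrete H²-norm: let m = 2R+1 be odd, h = L/m, and let φ be the complex grid function determined by coefficients c : {−R,…,R}³ → ℂ via φ_{i,j,k} = Σ_{r,s,t=−R}^{R} c_{r,s,t} e^{2πi(r x_i + s y_j + t z_k)/L}. Then L³ Σ_{r,s,t=−R}^{R} [ 1 + (2π/L)²(r² + s² + t²) + 2(2π/L)⁴(r⁴ + s⁴ + t⁴) ] |c_{r,s,t}|² ≤ 2(π/2)⁴ ‖φ‖_{2,2}². -/

import Mathlib

open Finset Real

/-- The grid point `x_i = (i - 1/2) h`. -/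
noncomputable def xg (h : ℝ) (i : ℤ) : ℝ := ((i : ℝ) - 1 / 2) * h

/-- The complex grid function determined by Fourier coefficients `c` on `{-R,…,R}³`:
`φ_{i,j,k} = Σ_{r,s,t=-R}^{R} c_{r,s,t} e^{2πi(r x_i + s y_j + t z_k)/L}`
(as a function of the integer indices, it is automatically `m`-periodic, `m = 2R+1`). -/
noncomputable def fgrid (L h : ℝ) (R : ℕ) (c : ℤ × ℤ × ℤ → ℂ) (i j k : ℤ) : ℂ :=
  ∑ r ∈ Finset.Icc (-(R : ℤ)) (R : ℤ), ∑ s ∈ Finset.Icc (-(R : ℤ)) (R : ℤ),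
    ∑ t ∈ Finset.Icc (-(R : ℤ)) (R : ℤ),
      c (r, s, t) *
        Complex.exp (2 * (Real.pi : ℂ) * Complex.I *
          ((r * xg h i + s * xg h j + t * xg h k : ℝ) : ℂ) / (L : ℂ))


set_option maxHeartbeats 1600000

noncomputable def ee (m : ℕ) (r i : ℤ) : ℂ :=
  Complex.exp (2 * (Real.pi : ℂ) * Complex.I * r * (2 * i - 1) / (2 * m))

noncomputable def qq (m : ℕ) (r : ℤ) : ℂ :=
  Complex.exp (2 * (Real.pi : ℂ) * Complex.I * r / m)

lemma ee_conj (m : ℕ) (r i : ℤ) : (starRingEnd ℂ) (ee m r i) = ee m (-r) i := by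
  rw [ee, ← Complex.exp_conj]
  congr 1
  simp only [map_div₀, map_mul, map_sub, map_ofNat, map_one, Complex.conj_I,
    Complex.conj_ofReal, map_intCast, map_natCast]
  push_cast
  ring

lemma ee_mul (m : ℕ) (r r' i : ℤ) : ee m r i * ee m r' i = ee m (r + r') i := by
  rw [ee, ee, ee, ← Complex.exp_add]
  congr 1
  push_cast
  ring

lemma ee_zero (m : ℕ) (i : ℤ) : ee m 0 i = 1 := by
  simp [ee]

lemma ee_succ (m : ℕ) (hm : 0 < m) (r i : ℤ) : ee m r (i + 1) = ee m r i * qq m r := by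
  rw [ee, ee, qq, ← Complex.exp_add]
  congr 1
  have : (m : ℂ) ≠ 0 := Nat.cast_ne_zero.mpr hm.ne'
  push_cast
  field_simp
  ring

lemma ee_pred (m : ℕ) (hm : 0 < m) (r i : ℤ) : ee m r (i - 1) = ee m r i * qq m (-r) := by
  rw [ee, ee, qq, ← Complex.exp_add]
  congr 1
  have : (m : ℂ) ≠ 0 := Nat.cast_ne_zero.mpr hm.ne'
  push_cast
  field_simp
  ring

lemma icc_map (m : ℕ) :
    Finset.Icc (1 : ℤ) (m : ℤ) =
      Finset.map ⟨fun k : ℕ => (k : ℤ) + 1, fun a b hab => by simpa using hab⟩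
        (Finset.range m) := by
  ext x
  simp only [Finset.mem_Icc, Finset.mem_map, Finset.mem_range, Function.Embedding.coeFn_mk]
  constructor
  · rintro ⟨h1, h2⟩
    exact ⟨(x - 1).toNat, by omega, by show ((x - 1).toNat : ℤ) + 1 = x; omega⟩
  · rintro ⟨k, hk, rfl⟩
    show 1 ≤ (k : ℤ) + 1 ∧ (k : ℤ) + 1 ≤ m
    omega

lemma sum_Icc_eq_range (m : ℕ) (f : ℤ → ℂ) :
    ∑ i ∈ Finset.Icc (1 : ℤ) (m : ℤ), f i = ∑ k ∈ Finset.range m, f ((k : ℤ) + 1) := by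
  rw [icc_map m, Finset.sum_map]
  rfl

lemma qq_ne_one (m : ℕ) (d : ℤ) (hd : d ≠ 0) (hdm : d.natAbs < m) : qq m d ≠ 1 := by
  have hm : 0 < m := lt_of_le_of_lt (Nat.zero_le _) hdm
  intro h
  rw [qq, Complex.exp_eq_one_iff] at h
  obtain ⟨n, hn⟩ := h
  have hmC : (m : ℂ) ≠ 0 := Nat.cast_ne_zero.mpr hm.ne'
  have hpi : (Real.pi : ℂ) ≠ 0 := by exact_mod_cast Real.pi_ne_zero
  have h2 : (2 : ℂ) * Real.pi * Complex.I ≠ 0 := by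
    simp [Complex.I_ne_zero, hpi]
  field_simp at hn
  have hdc : (d : ℂ) = (n : ℂ) * m := by
    apply mul_left_cancel₀ h2
    rw [show 2 * (Real.pi : ℂ) * Complex.I * ((n:ℂ) * m) = (n:ℂ) * (2 * Real.pi * Complex.I) * m by ring]
    rw [hn]; ring
  have hdz : d = n * m := by exact_mod_cast hdc
  have hn0 : n ≠ 0 := by
    intro h0; apply hd; simp [h0] at hdz; exact hdz
  have : (m : ℤ) ≤ d.natAbs := by
    rw [hdz]
    have : (1 : ℤ) ≤ n.natAbs := by omega
    calc (m : ℤ) = 1 * m := (one_mul _).symm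
    _ ≤ n.natAbs * m := by
        apply mul_le_mul_of_nonneg_right this (by positivity)
    _ = (n * m).natAbs := by
        rw [Int.natAbs_mul]; push_cast [Int.natAbs_natCast]; ring
  omega

lemma ee_sum_zero (m : ℕ) (d : ℤ) (hd : d ≠ 0) (hdm : d.natAbs < m) :
    ∑ i ∈ Finset.Icc (1 : ℤ) (m : ℤ), ee m d i = 0 := by
  have hm : 0 < m := lt_of_le_of_lt (Nat.zero_le _) hdm
  have hmC : (m : ℂ) ≠ 0 := Nat.cast_ne_zero.mpr hm.ne'
  rw [sum_Icc_eq_range]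
  have hterm : ∀ k : ℕ, ee m d ((k : ℤ) + 1) =
      Complex.exp (2 * (Real.pi : ℂ) * Complex.I * d / (2 * m)) * qq m d ^ k := by
    intro k
    rw [ee, qq, ← Complex.exp_nat_mul, ← Complex.exp_add]
    congr 1
    push_cast
    field_simp
    ring
  calc ∑ k ∈ Finset.range m, ee m d ((k : ℤ) + 1)
      = ∑ k ∈ Finset.range m,
          Complex.exp (2 * (Real.pi : ℂ) * Complex.I * d / (2 * m)) * qq m d ^ k := by
        exact Finset.sum_congr rfl fun k _ => hterm k
    _ = Complex.exp (2 * (Real.pi : ℂ) * Complex.I * d / (2 * m)) *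
          ∑ k ∈ Finset.range m, qq m d ^ k := by rw [Finset.mul_sum]
    _ = 0 := by
        rw [geom_sum_eq (qq_ne_one m d hd hdm)]
        have : qq m d ^ m = 1 := by
          rw [qq, ← Complex.exp_nat_mul]
          rw [show (m : ℂ) * (2 * (Real.pi : ℂ) * Complex.I * d / m) = (d : ℂ) * (2 * Real.pi * Complex.I) by field_simp]
          exact Complex.exp_int_mul_two_pi_mul_I d
        rw [this]
        simp

lemma card_Icc_m (m : ℕ) : (Finset.Icc (1 : ℤ) (m : ℤ)).card = m := by
  rw [icc_map m, Finset.card_map, Finset.card_range]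

lemma ee_orth (R m : ℕ) (hm : m = 2 * R + 1) (r r' : ℤ)
    (hr : r ∈ Finset.Icc (-(R : ℤ)) (R : ℤ)) (hr' : r' ∈ Finset.Icc (-(R : ℤ)) (R : ℤ)) :
    ∑ i ∈ Finset.Icc (1 : ℤ) (m : ℤ), ee m r i * (starRingEnd ℂ) (ee m r' i) =
      if r = r' then (m : ℂ) else 0 := by
  simp only [Finset.mem_Icc] at hr hr'
  have : ∀ i : ℤ, ee m r i * (starRingEnd ℂ) (ee m r' i) = ee m (r - r') i := by
    intro i
    rw [ee_conj, ee_mul, sub_eq_add_neg]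
  simp only [this]
  by_cases h : r = r'
  · simp only [h, sub_self, if_pos rfl, ee_zero]
    rw [Finset.sum_const, card_Icc_m]
    simp
  · rw [if_neg h]
    apply ee_sum_zero m (r - r') (sub_ne_zero.mpr h)
    omega

lemma par1 (R m : ℕ) (hm : m = 2 * R + 1) (g : ℤ → ℂ) :
    ∑ i ∈ Finset.Icc (1 : ℤ) (m : ℤ),
        Complex.normSq (∑ r ∈ Finset.Icc (-(R : ℤ)) (R : ℤ), g r * ee m r i) =
      m * ∑ r ∈ Finset.Icc (-(R : ℤ)) (R : ℤ), Complex.normSq (g r) := by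
  have key : ∑ i ∈ Finset.Icc (1 : ℤ) (m : ℤ),
      ((∑ r ∈ Finset.Icc (-(R : ℤ)) (R : ℤ), g r * ee m r i) *
        (starRingEnd ℂ) (∑ r ∈ Finset.Icc (-(R : ℤ)) (R : ℤ), g r * ee m r i)) =
      (m : ℂ) * ∑ r ∈ Finset.Icc (-(R : ℤ)) (R : ℤ), g r * (starRingEnd ℂ) (g r) := by
    have expand : ∀ i : ℤ,
        (∑ r ∈ Finset.Icc (-(R : ℤ)) (R : ℤ), g r * ee m r i) *
          (starRingEnd ℂ) (∑ r ∈ Finset.Icc (-(R : ℤ)) (R : ℤ), g r * ee m r i) =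
        ∑ r ∈ Finset.Icc (-(R : ℤ)) (R : ℤ), ∑ r' ∈ Finset.Icc (-(R : ℤ)) (R : ℤ),
          (g r * (starRingEnd ℂ) (g r')) * (ee m r i * (starRingEnd ℂ) (ee m r' i)) := by
      intro i
      rw [map_sum, Finset.sum_mul_sum]
      apply Finset.sum_congr rfl; intro r _
      apply Finset.sum_congr rfl; intro r' _
      rw [map_mul]; ring
    simp only [expand]
    rw [Finset.sum_comm]
    have : ∀ r ∈ Finset.Icc (-(R : ℤ)) (R : ℤ),
        (∑ i ∈ Finset.Icc (1 : ℤ) (m : ℤ), ∑ r' ∈ Finset.Icc (-(R : ℤ)) (R : ℤ),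
          (g r * (starRingEnd ℂ) (g r')) * (ee m r i * (starRingEnd ℂ) (ee m r' i))) =
        (m : ℂ) * (g r * (starRingEnd ℂ) (g r)) := by
      intro r hr
      rw [Finset.sum_comm]
      have : ∀ r' ∈ Finset.Icc (-(R : ℤ)) (R : ℤ),
          (∑ i ∈ Finset.Icc (1 : ℤ) (m : ℤ),
            (g r * (starRingEnd ℂ) (g r')) * (ee m r i * (starRingEnd ℂ) (ee m r' i))) =
          (g r * (starRingEnd ℂ) (g r')) * (if r = r' then (m : ℂ) else 0) := by
        intro r' hr'
        rw [← Finset.mul_sum, ee_orth R m hm r r' hr hr']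
      rw [Finset.sum_congr rfl this]
      simp only [mul_ite, mul_zero]
      rw [Finset.sum_ite_eq]
      rw [if_pos hr]
      ring
    rw [Finset.sum_congr rfl this, ← Finset.mul_sum]
  have := key
  simp only [Complex.mul_conj] at this
  exact_mod_cast this

lemma sum_rot {M : Type*} [AddCommMonoid M] (A B C : Finset ℤ) (f : ℤ → ℤ → ℤ → M) :
    ∑ a ∈ A, ∑ b ∈ B, ∑ c ∈ C, f a b c = ∑ c ∈ C, ∑ a ∈ A, ∑ b ∈ B, f a b c :=
  calc ∑ a ∈ A, ∑ b ∈ B, ∑ c ∈ C, f a b c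
      = ∑ a ∈ A, ∑ c ∈ C, ∑ b ∈ B, f a b c :=
        Finset.sum_congr rfl fun a _ => Finset.sum_comm
    _ = ∑ c ∈ C, ∑ a ∈ A, ∑ b ∈ B, f a b c := Finset.sum_comm

lemma par3 (R m : ℕ) (hm : m = 2 * R + 1) (g : ℤ × ℤ × ℤ → ℂ) :
    ∑ i ∈ Finset.Icc (1 : ℤ) (m : ℤ), ∑ j ∈ Finset.Icc (1 : ℤ) (m : ℤ),
        ∑ k ∈ Finset.Icc (1 : ℤ) (m : ℤ),
          Complex.normSq (∑ r ∈ Finset.Icc (-(R : ℤ)) (R : ℤ),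
            ∑ s ∈ Finset.Icc (-(R : ℤ)) (R : ℤ), ∑ t ∈ Finset.Icc (-(R : ℤ)) (R : ℤ),
              g (r, s, t) * (ee m r i * ee m s j * ee m t k)) =
      (m : ℝ) ^ 3 * ∑ r ∈ Finset.Icc (-(R : ℤ)) (R : ℤ), ∑ s ∈ Finset.Icc (-(R : ℤ)) (R : ℤ),
        ∑ t ∈ Finset.Icc (-(R : ℤ)) (R : ℤ), Complex.normSq (g (r, s, t)) := by
  set B := Finset.Icc (-(R : ℤ)) (R : ℤ) with hB
  set G := Finset.Icc (1 : ℤ) (m : ℤ) with hG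
  have rearr1 : ∀ i j k : ℤ,
      (∑ r ∈ B, ∑ s ∈ B, ∑ t ∈ B, g (r, s, t) * (ee m r i * ee m s j * ee m t k)) =
      ∑ t ∈ B, (∑ r ∈ B, ∑ s ∈ B, g (r, s, t) * (ee m r i * ee m s j)) * ee m t k := by
    intro i j k
    rw [sum_rot]
    apply Finset.sum_congr rfl; intro t _
    rw [Finset.sum_mul]
    apply Finset.sum_congr rfl; intro r _
    rw [Finset.sum_mul]
    apply Finset.sum_congr rfl; intro s _
    ring
  have rearr2 : ∀ i j t : ℤ,
      (∑ r ∈ B, ∑ s ∈ B, g (r, s, t) * (ee m r i * ee m s j)) =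
      ∑ s ∈ B, (∑ r ∈ B, g (r, s, t) * ee m r i) * ee m s j := by
    intro i j t
    rw [Finset.sum_comm]
    apply Finset.sum_congr rfl; intro s _
    rw [Finset.sum_mul]
    apply Finset.sum_congr rfl; intro r _
    ring
  calc ∑ i ∈ G, ∑ j ∈ G, ∑ k ∈ G,
        Complex.normSq (∑ r ∈ B, ∑ s ∈ B, ∑ t ∈ B,
          g (r, s, t) * (ee m r i * ee m s j * ee m t k))
      = ∑ i ∈ G, ∑ j ∈ G, ((m : ℝ) * ∑ t ∈ B,
          Complex.normSq (∑ r ∈ B, ∑ s ∈ B, g (r, s, t) * (ee m r i * ee m s j))) := by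
        apply Finset.sum_congr rfl; intro i _
        apply Finset.sum_congr rfl; intro j _
        simp only [rearr1]
        exact par1 R m hm _
    _ = (m : ℝ) * ∑ i ∈ G, ∑ t ∈ B, ∑ j ∈ G,
          Complex.normSq (∑ r ∈ B, ∑ s ∈ B, g (r, s, t) * (ee m r i * ee m s j)) := by
        simp only [← Finset.mul_sum]
        congr 1
        exact Finset.sum_congr rfl fun i _ => Finset.sum_comm
    _ = (m : ℝ) * ∑ i ∈ G, ∑ t ∈ B, ((m : ℝ) * ∑ s ∈ B,
          Complex.normSq (∑ r ∈ B, g (r, s, t) * ee m r i)) := by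
        congr 1
        apply Finset.sum_congr rfl; intro i _
        apply Finset.sum_congr rfl; intro t _
        simp only [rearr2]
        exact par1 R m hm _
    _ = (m : ℝ) * ((m : ℝ) * ∑ t ∈ B, ∑ s ∈ B, ∑ i ∈ G,
          Complex.normSq (∑ r ∈ B, g (r, s, t) * ee m r i)) := by
        simp only [← Finset.mul_sum]
        congr 2
        rw [← sum_rot B B G]
    _ = (m : ℝ) * ((m : ℝ) * ∑ t ∈ B, ∑ s ∈ B, ((m : ℝ) *
          ∑ r ∈ B, Complex.normSq (g (r, s, t)))) := by
        congr 1; congr 1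
        apply Finset.sum_congr rfl; intro t _
        apply Finset.sum_congr rfl; intro s _
        exact par1 R m hm _
    _ = (m : ℝ) ^ 3 * ∑ r ∈ B, ∑ s ∈ B, ∑ t ∈ B, Complex.normSq (g (r, s, t)) := by
        have reord : ∑ t ∈ B, ∑ s ∈ B, ∑ r ∈ B, Complex.normSq (g (r, s, t)) =
            ∑ r ∈ B, ∑ s ∈ B, ∑ t ∈ B, Complex.normSq (g (r, s, t)) := by
          rw [sum_rot B B B fun t s r => Complex.normSq (g (r, s, t))]
          exact Finset.sum_congr rfl fun r _ => Finset.sum_comm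
        simp only [← Finset.mul_sum]
        rw [reord]
        ring

lemma fgrid_eq (L h : ℝ) (hL : L ≠ 0) (R m : ℕ) (hm : m = 2 * R + 1) (hh : h = L / m)
    (c : ℤ × ℤ × ℤ → ℂ) (i j k : ℤ) :
    fgrid L h R c i j k =
      ∑ r ∈ Finset.Icc (-(R : ℤ)) (R : ℤ), ∑ s ∈ Finset.Icc (-(R : ℤ)) (R : ℤ),
        ∑ t ∈ Finset.Icc (-(R : ℤ)) (R : ℤ),
          c (r, s, t) * (ee m r i * ee m s j * ee m t k) := by
  have hm0 : m ≠ 0 := by omega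
  have hmC : (m : ℂ) ≠ 0 := Nat.cast_ne_zero.mpr hm0
  have hLC : (L : ℂ) ≠ 0 := by exact_mod_cast hL
  rw [fgrid]
  apply Finset.sum_congr rfl; intro r _
  apply Finset.sum_congr rfl; intro s _
  apply Finset.sum_congr rfl; intro t _
  congr 1
  rw [ee, ee, ee, ← Complex.exp_add, ← Complex.exp_add]
  congr 1
  subst hh
  push_cast [xg]
  field_simp

section reps
variable (L h : ℝ) (R m : ℕ) (c : ℤ × ℤ × ℤ → ℂ)

lemma rep_dx (hL : L ≠ 0) (hm : m = 2 * R + 1) (hh : h = L / m) (i j k : ℤ) :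
    (fgrid L h R c (i + 1) j k - fgrid L h R c i j k) / (h : ℂ) =
      ∑ r ∈ Finset.Icc (-(R : ℤ)) (R : ℤ), ∑ s ∈ Finset.Icc (-(R : ℤ)) (R : ℤ),
        ∑ t ∈ Finset.Icc (-(R : ℤ)) (R : ℤ),
          (c (r, s, t) * (qq m r - 1) / (h : ℂ)) * (ee m r i * ee m s j * ee m t k) := by
  have hm0 : 0 < m := by omega
  rw [fgrid_eq L h hL R m hm hh c (i+1) j k, fgrid_eq L h hL R m hm hh c i j k]
  simp only [← Finset.sum_sub_distrib, Finset.sum_div]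
  apply Finset.sum_congr rfl; intro r _
  apply Finset.sum_congr rfl; intro s _
  apply Finset.sum_congr rfl; intro t _
  rw [ee_succ m hm0 r i]
  ring

lemma rep_dy (hL : L ≠ 0) (hm : m = 2 * R + 1) (hh : h = L / m) (i j k : ℤ) :
    (fgrid L h R c i (j + 1) k - fgrid L h R c i j k) / (h : ℂ) =
      ∑ r ∈ Finset.Icc (-(R : ℤ)) (R : ℤ), ∑ s ∈ Finset.Icc (-(R : ℤ)) (R : ℤ),
        ∑ t ∈ Finset.Icc (-(R : ℤ)) (R : ℤ),
          (c (r, s, t) * (qq m s - 1) / (h : ℂ)) * (ee m r i * ee m s j * ee m t k) := by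
  have hm0 : 0 < m := by omega
  rw [fgrid_eq L h hL R m hm hh c i (j+1) k, fgrid_eq L h hL R m hm hh c i j k]
  simp only [← Finset.sum_sub_distrib, Finset.sum_div]
  apply Finset.sum_congr rfl; intro r _
  apply Finset.sum_congr rfl; intro s _
  apply Finset.sum_congr rfl; intro t _
  rw [ee_succ m hm0 s j]
  ring

lemma rep_dz (hL : L ≠ 0) (hm : m = 2 * R + 1) (hh : h = L / m) (i j k : ℤ) :
    (fgrid L h R c i j (k + 1) - fgrid L h R c i j k) / (h : ℂ) =
      ∑ r ∈ Finset.Icc (-(R : ℤ)) (R : ℤ), ∑ s ∈ Finset.Icc (-(R : ℤ)) (R : ℤ),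
        ∑ t ∈ Finset.Icc (-(R : ℤ)) (R : ℤ),
          (c (r, s, t) * (qq m t - 1) / (h : ℂ)) * (ee m r i * ee m s j * ee m t k) := by
  have hm0 : 0 < m := by omega
  rw [fgrid_eq L h hL R m hm hh c i j (k+1), fgrid_eq L h hL R m hm hh c i j k]
  simp only [← Finset.sum_sub_distrib, Finset.sum_div]
  apply Finset.sum_congr rfl; intro r _
  apply Finset.sum_congr rfl; intro s _
  apply Finset.sum_congr rfl; intro t _
  rw [ee_succ m hm0 t k]
  ring

lemma rep_lap (hL : L ≠ 0) (hm : m = 2 * R + 1) (hh : h = L / m) (i j k : ℤ) :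
    (fgrid L h R c (i + 1) j k + fgrid L h R c (i - 1) j k + fgrid L h R c i (j + 1) k
        + fgrid L h R c i (j - 1) k + fgrid L h R c i j (k + 1) + fgrid L h R c i j (k - 1)
        - 6 * fgrid L h R c i j k) / (h : ℂ) ^ 2 =
      ∑ r ∈ Finset.Icc (-(R : ℤ)) (R : ℤ), ∑ s ∈ Finset.Icc (-(R : ℤ)) (R : ℤ),
        ∑ t ∈ Finset.Icc (-(R : ℤ)) (R : ℤ),
          (c (r, s, t) * (qq m r + qq m (-r) + qq m s + qq m (-s) + qq m t + qq m (-t) - 6)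
              / (h : ℂ) ^ 2) * (ee m r i * ee m s j * ee m t k) := by
  have hm0 : 0 < m := by omega
  rw [fgrid_eq L h hL R m hm hh c (i+1) j k, fgrid_eq L h hL R m hm hh c (i-1) j k,
    fgrid_eq L h hL R m hm hh c i (j+1) k, fgrid_eq L h hL R m hm hh c i (j-1) k,
    fgrid_eq L h hL R m hm hh c i j (k+1), fgrid_eq L h hL R m hm hh c i j (k-1),
    fgrid_eq L h hL R m hm hh c i j k]
  simp only [Finset.mul_sum, ← Finset.sum_add_distrib, ← Finset.sum_sub_distrib,
    Finset.sum_div]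
  apply Finset.sum_congr rfl; intro r _
  apply Finset.sum_congr rfl; intro s _
  apply Finset.sum_congr rfl; intro t _
  rw [ee_succ m hm0 r i, ee_pred m hm0 r i, ee_succ m hm0 s j, ee_pred m hm0 s j,
    ee_succ m hm0 t k, ee_pred m hm0 t k]
  ring

end reps

lemma qq_eq (m : ℕ) (r : ℤ) : qq m r = Complex.exp (((2 * Real.pi * r / m : ℝ) : ℂ) * Complex.I) := by
  rw [qq]; congr 1; push_cast; ring

lemma normSq_qq_sub_one (m : ℕ) (r : ℤ) :
    Complex.normSq (qq m r - 1) = 2 - 2 * Real.cos (2 * Real.pi * r / m) := by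
  rw [qq_eq, Complex.normSq_apply]
  simp only [Complex.sub_re, Complex.sub_im, Complex.one_re, Complex.one_im,
    Complex.exp_ofReal_mul_I_re, Complex.exp_ofReal_mul_I_im]
  nlinarith [Real.sin_sq_add_cos_sq (2 * Real.pi * r / m)]

lemma qq_add_neg (m : ℕ) (r : ℤ) :
    qq m r + qq m (-r) = ((2 * Real.cos (2 * Real.pi * r / m) : ℝ) : ℂ) := by
  rw [qq_eq, qq_eq]
  have : ((2 * Real.pi * (-r : ℤ) / m : ℝ) : ℂ) = ((-(2 * Real.pi * r / m) : ℝ) : ℂ) := by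
    push_cast; ring
  rw [this]
  apply Complex.ext
  · simp only [Complex.add_re, Complex.exp_ofReal_mul_I_re, Complex.ofReal_re, Real.cos_neg]
    ring
  · simp only [Complex.add_im, Complex.exp_ofReal_mul_I_im, Complex.ofReal_im, Real.sin_neg]
    ring

lemma cos_bound (R m : ℕ) (hm : m = 2 * R + 1) (r : ℤ) (hr : r.natAbs ≤ R) :
    16 * (r : ℝ) ^ 2 / m ^ 2 ≤ 2 - 2 * Real.cos (2 * Real.pi * r / m) := by
  have hm0 : (0 : ℝ) < m := by
    have : 0 < m := by omega
    exact_mod_cast this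
  set x := 2 * Real.pi * r / m with hx
  have hxabs : |x| ≤ Real.pi := by
    rw [hx, abs_div, abs_of_pos hm0, div_le_iff₀ hm0]
    have h1 : |2 * Real.pi * (r : ℝ)| = 2 * Real.pi * |(r : ℝ)| := by
      rw [abs_mul, abs_of_pos (by positivity : (0:ℝ) < 2 * Real.pi)]
    rw [h1]
    have h2 : |(r : ℝ)| ≤ (R : ℝ) := by
      rw [← Int.cast_abs]
      rw [Int.abs_eq_natAbs]
      exact_mod_cast hr
    have h3 : 2 * (R : ℝ) ≤ (m : ℝ) := by
      rw [hm]; push_cast; linarith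
    nlinarith [Real.pi_pos]
  have hcos := Real.cos_le_one_sub_mul_cos_sq hxabs
  have hx2 : x ^ 2 = 4 * Real.pi ^ 2 * (r : ℝ) ^ 2 / m ^ 2 := by
    rw [hx]; field_simp; ring
  have hpi : Real.pi ^ 2 > 0 := by positivity
  have heq : 2 / Real.pi ^ 2 * x ^ 2 = 8 * (r : ℝ) ^ 2 / m ^ 2 := by
    rw [hx2]; field_simp; ring
  rw [heq] at hcos
  have hgoal : 16 * (r : ℝ) ^ 2 / m ^ 2 = 2 * (8 * (r : ℝ) ^ 2 / m ^ 2) := by ring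
  rw [hgoal]
  linarith

lemma scal (x y z u v w : ℝ) (hx : 0 ≤ x) (hy : 0 ≤ y) (hz : 0 ≤ z)
    (hu : 16 * x ≤ u) (hv : 16 * y ≤ v) (hw : 16 * z ≤ w) :
    1 + 4 * Real.pi ^ 2 * (x + y + z) + 32 * Real.pi ^ 4 * (x ^ 2 + y ^ 2 + z ^ 2) ≤
      2 * (Real.pi / 2) ^ 4 * (1 + (u + v + w) + (u + v + w) ^ 2) := by
  have hp : 3 < Real.pi := Real.pi_gt_three
  have hp2 : 9 ≤ Real.pi ^ 2 := by nlinarith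
  have hp4 : 81 ≤ Real.pi ^ 4 := by nlinarith
  have hu0 : 0 ≤ u := le_trans (by linarith) hu
  have hv0 : 0 ≤ v := le_trans (by linarith) hv
  have hw0 : 0 ≤ w := le_trans (by linarith) hw
  have hK : 2 * (Real.pi / 2) ^ 4 = Real.pi ^ 4 / 8 := by ring
  rw [hK]
  have huu : 256 * x ^ 2 ≤ u ^ 2 := by nlinarith
  have hvv : 256 * y ^ 2 ≤ v ^ 2 := by nlinarith
  have hww : 256 * z ^ 2 ≤ w ^ 2 := by nlinarith
  have hsq : u ^ 2 + v ^ 2 + w ^ 2 ≤ (u + v + w) ^ 2 := by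
    nlinarith [mul_nonneg hu0 hv0, mul_nonneg hu0 hw0, mul_nonneg hv0 hw0]
  have l1 : 4 * Real.pi ^ 2 * x ≤ Real.pi ^ 4 / 8 * u := by
    nlinarith [mul_nonneg hx (by nlinarith : (0:ℝ) ≤ 2 * Real.pi ^ 4 - 4 * Real.pi ^ 2)]
  have l2 : 4 * Real.pi ^ 2 * y ≤ Real.pi ^ 4 / 8 * v := by
    nlinarith [mul_nonneg hy (by nlinarith : (0:ℝ) ≤ 2 * Real.pi ^ 4 - 4 * Real.pi ^ 2)]
  have l3 : 4 * Real.pi ^ 2 * z ≤ Real.pi ^ 4 / 8 * w := by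
    nlinarith [mul_nonneg hz (by nlinarith : (0:ℝ) ≤ 2 * Real.pi ^ 4 - 4 * Real.pi ^ 2)]
  have q1 : 32 * Real.pi ^ 4 * (x ^ 2 + y ^ 2 + z ^ 2) ≤ Real.pi ^ 4 / 8 * (u ^ 2 + v ^ 2 + w ^ 2) := by
    nlinarith [mul_nonneg (by positivity : (0:ℝ) ≤ Real.pi ^ 4) (by linarith : (0:ℝ) ≤ u ^ 2 - 256 * x ^ 2),
      mul_nonneg (by positivity : (0:ℝ) ≤ Real.pi ^ 4) (by linarith : (0:ℝ) ≤ v ^ 2 - 256 * y ^ 2),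
      mul_nonneg (by positivity : (0:ℝ) ≤ Real.pi ^ 4) (by linarith : (0:ℝ) ≤ w ^ 2 - 256 * z ^ 2)]
  have q2 : Real.pi ^ 4 / 8 * (u ^ 2 + v ^ 2 + w ^ 2) ≤ Real.pi ^ 4 / 8 * (u + v + w) ^ 2 := by
    apply mul_le_mul_of_nonneg_left hsq (by positivity)
  nlinarith [l1, l2, l3, q1, q2]

lemma normSq_lap (m : ℕ) (r s t : ℤ) :
    Complex.normSq (qq m r + qq m (-r) + qq m s + qq m (-s) + qq m t + qq m (-t) - 6) =
      ((2 - 2 * Real.cos (2 * Real.pi * r / m)) + (2 - 2 * Real.cos (2 * Real.pi * s / m))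
        + (2 - 2 * Real.cos (2 * Real.pi * t / m))) ^ 2 := by
  have key : qq m r + qq m (-r) + qq m s + qq m (-s) + qq m t + qq m (-t) - 6 =
      (((2 * Real.cos (2 * Real.pi * r / m) + 2 * Real.cos (2 * Real.pi * s / m)
        + 2 * Real.cos (2 * Real.pi * t / m) - 6 : ℝ)) : ℂ) := by
    rw [show qq m r + qq m (-r) + qq m s + qq m (-s) + qq m t + qq m (-t) - 6 =
      (qq m r + qq m (-r)) + (qq m s + qq m (-s)) + (qq m t + qq m (-t)) - 6 by ring,
      qq_add_neg, qq_add_neg, qq_add_neg]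
    push_cast
    ring
  rw [key, Complex.normSq_ofReal]
  ring

lemma point (L h : ℝ) (hL : 0 < L) (R m : ℕ) (hm : m = 2 * R + 1) (hh : h = L / m)
    (r s t : ℤ) (hr : r.natAbs ≤ R) (hs : s.natAbs ≤ R) (ht : t.natAbs ≤ R)
    (N : ℝ) (hN : 0 ≤ N) :
    L ^ 3 * ((1 + (2 * Real.pi / L) ^ 2 * ((r : ℝ) ^ 2 + (s : ℝ) ^ 2 + (t : ℝ) ^ 2)
        + 2 * (2 * Real.pi / L) ^ 4 * ((r : ℝ) ^ 4 + (s : ℝ) ^ 4 + (t : ℝ) ^ 4)) * N) ≤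
      2 * (Real.pi / 2) ^ 4 * (L ^ 3 * N *
        (1 + ((2 - 2 * Real.cos (2 * Real.pi * r / m)) + (2 - 2 * Real.cos (2 * Real.pi * s / m))
            + (2 - 2 * Real.cos (2 * Real.pi * t / m))) / h ^ 2
          + (((2 - 2 * Real.cos (2 * Real.pi * r / m)) + (2 - 2 * Real.cos (2 * Real.pi * s / m))
            + (2 - 2 * Real.cos (2 * Real.pi * t / m))) / h ^ 2) ^ 2)) := by
  have hm0 : 0 < m := by omega
  have hmR : (0 : ℝ) < m := by exact_mod_cast hm0
  have hh0 : 0 < h := by rw [hh]; positivity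
  have hhm : h * m = L := by rw [hh]; field_simp
  set a := 2 - 2 * Real.cos (2 * Real.pi * r / m) with ha
  set b := 2 - 2 * Real.cos (2 * Real.pi * s / m) with hb
  set d := 2 - 2 * Real.cos (2 * Real.pi * t / m) with hd
  have hu : 16 * ((r : ℝ) ^ 2 / L ^ 2) ≤ a / h ^ 2 := by
    have key := cos_bound R m hm r hr
    have heq : 16 * ((r : ℝ) ^ 2 / L ^ 2) = (16 * (r : ℝ) ^ 2 / m ^ 2) / h ^ 2 := by
      rw [← hhm]; field_simp
    rw [heq]
    exact div_le_div_of_nonneg_right key (by positivity) |>.trans_eq rfl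
  have hv : 16 * ((s : ℝ) ^ 2 / L ^ 2) ≤ b / h ^ 2 := by
    have key := cos_bound R m hm s hs
    have heq : 16 * ((s : ℝ) ^ 2 / L ^ 2) = (16 * (s : ℝ) ^ 2 / m ^ 2) / h ^ 2 := by
      rw [← hhm]; field_simp
    rw [heq]
    exact div_le_div_of_nonneg_right key (by positivity) |>.trans_eq rfl
  have hw : 16 * ((t : ℝ) ^ 2 / L ^ 2) ≤ d / h ^ 2 := by
    have key := cos_bound R m hm t ht
    have heq : 16 * ((t : ℝ) ^ 2 / L ^ 2) = (16 * (t : ℝ) ^ 2 / m ^ 2) / h ^ 2 := by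
      rw [← hhm]; field_simp
    rw [heq]
    exact div_le_div_of_nonneg_right key (by positivity) |>.trans_eq rfl
  have hscal := scal ((r : ℝ) ^ 2 / L ^ 2) ((s : ℝ) ^ 2 / L ^ 2) ((t : ℝ) ^ 2 / L ^ 2)
    (a / h ^ 2) (b / h ^ 2) (d / h ^ 2) (by positivity) (by positivity) (by positivity)
    hu hv hw
  have hWeq : 1 + (2 * Real.pi / L) ^ 2 * ((r : ℝ) ^ 2 + (s : ℝ) ^ 2 + (t : ℝ) ^ 2)
      + 2 * (2 * Real.pi / L) ^ 4 * ((r : ℝ) ^ 4 + (s : ℝ) ^ 4 + (t : ℝ) ^ 4) =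
      1 + 4 * Real.pi ^ 2 * ((r : ℝ) ^ 2 / L ^ 2 + (s : ℝ) ^ 2 / L ^ 2 + (t : ℝ) ^ 2 / L ^ 2)
      + 32 * Real.pi ^ 4 * (((r : ℝ) ^ 2 / L ^ 2) ^ 2 + ((s : ℝ) ^ 2 / L ^ 2) ^ 2
        + ((t : ℝ) ^ 2 / L ^ 2) ^ 2) := by
    field_simp
    ring
  have hAU : (a + b + d) / h ^ 2 = a / h ^ 2 + b / h ^ 2 + d / h ^ 2 := by ring
  rw [hAU]
  calc L ^ 3 * ((1 + (2 * Real.pi / L) ^ 2 * ((r : ℝ) ^ 2 + (s : ℝ) ^ 2 + (t : ℝ) ^ 2)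
        + 2 * (2 * Real.pi / L) ^ 4 * ((r : ℝ) ^ 4 + (s : ℝ) ^ 4 + (t : ℝ) ^ 4)) * N)
      = (L ^ 3 * N) * (1 + 4 * Real.pi ^ 2 * ((r : ℝ) ^ 2 / L ^ 2 + (s : ℝ) ^ 2 / L ^ 2
          + (t : ℝ) ^ 2 / L ^ 2) + 32 * Real.pi ^ 4 * (((r : ℝ) ^ 2 / L ^ 2) ^ 2
          + ((s : ℝ) ^ 2 / L ^ 2) ^ 2 + ((t : ℝ) ^ 2 / L ^ 2) ^ 2)) := by
        rw [← hWeq]; ring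
    _ ≤ (L ^ 3 * N) * (2 * (Real.pi / 2) ^ 4 * (1 + (a / h ^ 2 + b / h ^ 2 + d / h ^ 2)
          + (a / h ^ 2 + b / h ^ 2 + d / h ^ 2) ^ 2)) := by
        exact mul_le_mul_of_nonneg_left hscal (by positivity)
    _ = 2 * (Real.pi / 2) ^ 4 * (L ^ 3 * N * (1 + (a / h ^ 2 + b / h ^ 2 + d / h ^ 2)
          + (a / h ^ 2 + b / h ^ 2 + d / h ^ 2) ^ 2)) := by ring

/-- Continuous `H²`-norm of the trigonometric interpolant is controlled by the discrete
`H²`-norm: the discrete norms (`‖·‖₂²`, `‖∇_h·‖₂²`, `‖Δ_h·‖₂²`) are written out as grid sums. -/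
theorem stmt15 (L : ℝ) (hL : 0 < L) (R : ℕ) (m : ℕ) (hm : m = 2 * R + 1)
    (h : ℝ) (hh : h = L / m) (c : ℤ × ℤ × ℤ → ℂ)
    (Φ : ℤ → ℤ → ℤ → ℂ) (hΦ : Φ = fgrid L h R c) :
    L ^ 3 * ∑ r ∈ Finset.Icc (-(R : ℤ)) (R : ℤ), ∑ s ∈ Finset.Icc (-(R : ℤ)) (R : ℤ),
        ∑ t ∈ Finset.Icc (-(R : ℤ)) (R : ℤ),
          (1 + (2 * Real.pi / L) ^ 2 * ((r : ℝ) ^ 2 + (s : ℝ) ^ 2 + (t : ℝ) ^ 2)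
              + 2 * (2 * Real.pi / L) ^ 4 * ((r : ℝ) ^ 4 + (s : ℝ) ^ 4 + (t : ℝ) ^ 4)) *
            ‖c (r, s, t)‖ ^ 2 ≤
      2 * (Real.pi / 2) ^ 4 *
        ((h ^ 3 * ∑ i ∈ Finset.Icc (1 : ℤ) (m : ℤ), ∑ j ∈ Finset.Icc (1 : ℤ) (m : ℤ),
            ∑ k ∈ Finset.Icc (1 : ℤ) (m : ℤ), ‖Φ i j k‖ ^ 2)
          + (h ^ 3 * ∑ i ∈ Finset.Icc (1 : ℤ) (m : ℤ), ∑ j ∈ Finset.Icc (1 : ℤ) (m : ℤ),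
              ∑ k ∈ Finset.Icc (1 : ℤ) (m : ℤ),
                (‖(Φ (i + 1) j k - Φ i j k) / (h : ℂ)‖ ^ 2
                  + ‖(Φ i (j + 1) k - Φ i j k) / (h : ℂ)‖ ^ 2
                  + ‖(Φ i j (k + 1) - Φ i j k) / (h : ℂ)‖ ^ 2))
          + (h ^ 3 * ∑ i ∈ Finset.Icc (1 : ℤ) (m : ℤ), ∑ j ∈ Finset.Icc (1 : ℤ) (m : ℤ),
              ∑ k ∈ Finset.Icc (1 : ℤ) (m : ℤ),
                ‖(Φ (i + 1) j k + Φ (i - 1) j k + Φ i (j + 1) k + Φ i (j - 1) k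
                    + Φ i j (k + 1) + Φ i j (k - 1) - 6 * Φ i j k) / (h : ℂ) ^ 2‖ ^ 2)) := by
  subst hΦ
  have hm0 : 0 < m := by omega
  have hLne : L ≠ 0 := hL.ne'
  have hhm : h * m = L := by
    rw [hh]; field_simp
  have T0 : ∑ i ∈ Finset.Icc (1 : ℤ) (m : ℤ), ∑ j ∈ Finset.Icc (1 : ℤ) (m : ℤ),
      ∑ k ∈ Finset.Icc (1 : ℤ) (m : ℤ), ‖fgrid L h R c i j k‖ ^ 2 =
      (m : ℝ) ^ 3 * ∑ r ∈ Finset.Icc (-(R : ℤ)) (R : ℤ), ∑ s ∈ Finset.Icc (-(R : ℤ)) (R : ℤ),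
        ∑ t ∈ Finset.Icc (-(R : ℤ)) (R : ℤ), Complex.normSq (c (r, s, t)) := by
    simp only [Complex.sq_norm, fgrid_eq L h hLne R m hm hh c]
    exact par3 R m hm c
  have TX : ∑ i ∈ Finset.Icc (1 : ℤ) (m : ℤ), ∑ j ∈ Finset.Icc (1 : ℤ) (m : ℤ),
      ∑ k ∈ Finset.Icc (1 : ℤ) (m : ℤ),
        ‖(fgrid L h R c (i + 1) j k - fgrid L h R c i j k) / (h : ℂ)‖ ^ 2 =
      (m : ℝ) ^ 3 * ∑ r ∈ Finset.Icc (-(R : ℤ)) (R : ℤ), ∑ s ∈ Finset.Icc (-(R : ℤ)) (R : ℤ),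
        ∑ t ∈ Finset.Icc (-(R : ℤ)) (R : ℤ),
          Complex.normSq (c (r, s, t) * (qq m r - 1) / (h : ℂ)) := by
    simp only [Complex.sq_norm, rep_dx L h R m c hLne hm hh]
    exact par3 R m hm (fun v => c v * (qq m v.1 - 1) / (h : ℂ))
  have TY : ∑ i ∈ Finset.Icc (1 : ℤ) (m : ℤ), ∑ j ∈ Finset.Icc (1 : ℤ) (m : ℤ),
      ∑ k ∈ Finset.Icc (1 : ℤ) (m : ℤ),
        ‖(fgrid L h R c i (j + 1) k - fgrid L h R c i j k) / (h : ℂ)‖ ^ 2 =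
      (m : ℝ) ^ 3 * ∑ r ∈ Finset.Icc (-(R : ℤ)) (R : ℤ), ∑ s ∈ Finset.Icc (-(R : ℤ)) (R : ℤ),
        ∑ t ∈ Finset.Icc (-(R : ℤ)) (R : ℤ),
          Complex.normSq (c (r, s, t) * (qq m s - 1) / (h : ℂ)) := by
    simp only [Complex.sq_norm, rep_dy L h R m c hLne hm hh]
    exact par3 R m hm (fun v => c v * (qq m v.2.1 - 1) / (h : ℂ))
  have TZ : ∑ i ∈ Finset.Icc (1 : ℤ) (m : ℤ), ∑ j ∈ Finset.Icc (1 : ℤ) (m : ℤ),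
      ∑ k ∈ Finset.Icc (1 : ℤ) (m : ℤ),
        ‖(fgrid L h R c i j (k + 1) - fgrid L h R c i j k) / (h : ℂ)‖ ^ 2 =
      (m : ℝ) ^ 3 * ∑ r ∈ Finset.Icc (-(R : ℤ)) (R : ℤ), ∑ s ∈ Finset.Icc (-(R : ℤ)) (R : ℤ),
        ∑ t ∈ Finset.Icc (-(R : ℤ)) (R : ℤ),
          Complex.normSq (c (r, s, t) * (qq m t - 1) / (h : ℂ)) := by
    simp only [Complex.sq_norm, rep_dz L h R m c hLne hm hh]
    exact par3 R m hm (fun v => c v * (qq m v.2.2 - 1) / (h : ℂ))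
  have TL : ∑ i ∈ Finset.Icc (1 : ℤ) (m : ℤ), ∑ j ∈ Finset.Icc (1 : ℤ) (m : ℤ),
      ∑ k ∈ Finset.Icc (1 : ℤ) (m : ℤ),
        ‖(fgrid L h R c (i + 1) j k + fgrid L h R c (i - 1) j k
          + fgrid L h R c i (j + 1) k + fgrid L h R c i (j - 1) k + fgrid L h R c i j (k + 1)
          + fgrid L h R c i j (k - 1) - 6 * fgrid L h R c i j k) / (h : ℂ) ^ 2‖ ^ 2 =
      (m : ℝ) ^ 3 * ∑ r ∈ Finset.Icc (-(R : ℤ)) (R : ℤ), ∑ s ∈ Finset.Icc (-(R : ℤ)) (R : ℤ),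
        ∑ t ∈ Finset.Icc (-(R : ℤ)) (R : ℤ),
          Complex.normSq (c (r, s, t) * (qq m r + qq m (-r) + qq m s + qq m (-s) + qq m t
            + qq m (-t) - 6) / (h : ℂ) ^ 2) := by
    simp only [Complex.sq_norm, rep_lap L h R m c hLne hm hh]
    exact par3 R m hm (fun v => c v * (qq m v.1 + qq m (-v.1) + qq m v.2.1 + qq m (-v.2.1)
      + qq m v.2.2 + qq m (-v.2.2) - 6) / (h : ℂ) ^ 2)
  simp only [Finset.sum_add_distrib]
  rw [T0, TX, TY, TZ, TL]
  simp only [Complex.sq_norm]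
  simp only [Finset.mul_sum, ← Finset.sum_add_distrib]
  refine Finset.sum_le_sum fun r hr => Finset.sum_le_sum fun s hs => Finset.sum_le_sum fun t ht => ?_
  simp only [Finset.mem_Icc] at hr hs ht
  have hrR : r.natAbs ≤ R := by omega
  have hsR : s.natAbs ≤ R := by omega
  have htR : t.natAbs ≤ R := by omega
  have hpt := point L h hL R m hm hh r s t hrR hsR htR (Complex.normSq (c (r, s, t)))
    (Complex.normSq_nonneg _)
  refine hpt.trans (le_of_eq ?_)
  have hhne : h ≠ 0 := by
    rw [hh]
    have : (0:ℝ) < m := by exact_mod_cast hm0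
    positivity
  simp only [Complex.normSq_div, Complex.normSq_mul, normSq_qq_sub_one, normSq_lap,
    Complex.normSq_ofReal, map_pow]
  rw [← hhm]
  field_simp
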